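/- Let (G,κ) be a capacitated graph with κ(x) ≤ d_G(x) for all x and X ∪ Z independent. If property M*(G,κ) fails — i.e., there exists a nonempty W ⊆ Y^{κ>0} such that the auxiliary bipartite graph G^aux contains a matching from L(W) into W^κ saturating L(W) — then (G,κ) has a DP-Nash subgraph whose D-set contains some vertex of Y (and hence differs from X ∪ Z). -/

import Mathlib

open Finset
open scoped Classical

noncomputable section

variable {V : Type*} [Fintype V]

/-- Degree of a vertex in a (simple) graph on a finite vertex set. -/
def deg (H : SimpleGraph V) (x : V) : ℕ :=
  (Finset.univ.filter fun y => H.Adj x y).card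

/-- `(D, P; H)` is a DP-Nash subgraph of the capacitated graph `(G, κ)`:
`H` is a spanning subgraph of `G`, bipartite with partite sets `D` and `P`,
no vertex of `P` is isolated in `H`, and every `x ∈ D` has
`H`-degree `min (d_G x) (κ x)`. -/
def IsDPNash (G : SimpleGraph V) (κ : V → ℕ) (D P : Finset V) (H : SimpleGraph V) : Prop :=
  H ≤ G ∧ D ∪ P = Finset.univ ∧ Disjoint D P ∧
    (∀ ⦃u v⦄, H.Adj u v → (u ∈ D ∧ v ∈ P) ∨ (u ∈ P ∧ v ∈ D)) ∧
    (∀ v ∈ P, 0 < deg H v) ∧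
    (∀ x ∈ D, deg H x = min (deg G x) (κ x))

/-- `X = {x : κ(x) = d_G(x)}`. -/
def XX (G : SimpleGraph V) (κ : V → ℕ) : Finset V :=
  Finset.univ.filter fun x => κ x = deg G x

/-- `Y = N(X) \ X`. -/
def YY (G : SimpleGraph V) (κ : V → ℕ) : Finset V :=
  Finset.univ.filter fun y => y ∉ XX G κ ∧ ∃ x ∈ XX G κ, G.Adj x y

/-- `Z = V \ (X ∪ Y)`. -/
def ZZ (G : SimpleGraph V) (κ : V → ℕ) : Finset V :=
  Finset.univ \ (XX G κ ∪ YY G κ)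

/-- `Y^{κ>0} = {y ∈ Y : κ(y) > 0}`. -/
def Ypos (G : SimpleGraph V) (κ : V → ℕ) : Finset V :=
  (YY G κ).filter fun y => 0 < κ y

/-- The neighbours of `x` in `G` lying in `W`. -/
def nbrW (G : SimpleGraph V) (x : V) (W : Finset V) : Finset V :=
  Finset.univ.filter fun y => G.Adj x y ∧ y ∈ W

/-- `L(W) = {x ∈ X ∪ Z : |N_G(x) ∩ W| > d_G(x) - κ(x)}`. -/
def LL (G : SimpleGraph V) (κ : V → ℕ) (W : Finset V) : Finset V :=
  (XX G κ ∪ ZZ G κ).filter fun x => deg G x - κ x < (nbrW G x W).card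

def nbrF (G : SimpleGraph V) (x : V) : Finset V := Finset.univ.filter fun y => G.Adj x y

lemma deg_eq_nbrF (G : SimpleGraph V) (x : V) : deg G x = (nbrF G x).card := rfl

lemma mem_nbrF {G : SimpleGraph V} {x y : V} : y ∈ nbrF G x ↔ G.Adj x y := by
  simp [nbrF]

def ownG (G : SimpleGraph V) (Own : V → Finset V) : SimpleGraph V where
  Adj u v := (v ∈ Own u ∧ G.Adj u v) ∨ (u ∈ Own v ∧ G.Adj v u)
  symm := ⟨fun u v h => h.elim (fun h => Or.inr h) (fun h => Or.inl h)⟩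
  loopless := ⟨fun v h => h.elim (fun h => G.loopless.irrefl v h.2) (fun h => G.loopless.irrefl v h.2)⟩

lemma ownG_le (G : SimpleGraph V) (Own : V → Finset V) : ownG G Own ≤ G := by
  intro u v h
  rcases h with ⟨-, h⟩ | ⟨-, h⟩
  · exact h
  · exact G.adj_symm h

lemma ownG_adj {G : SimpleGraph V} {Own : V → Finset V} {u v : V} :
    (ownG G Own).Adj u v ↔ (v ∈ Own u ∧ G.Adj u v) ∨ (u ∈ Own v ∧ G.Adj v u) := Iff.rfl

lemma deg_ownG (G : SimpleGraph V) (Own : V → Finset V) (x : V)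
    (hsub : Own x ⊆ nbrF G x) (hnoback : ∀ v, x ∉ Own v) :
    deg (ownG G Own) x = (Own x).card := by
  unfold deg
  congr 1
  ext v
  simp only [mem_filter, mem_univ, true_and, ownG_adj]
  constructor
  · rintro (⟨hv, -⟩ | ⟨hx, -⟩)
    · exact hv
    · exact absurd hx (hnoback v)
  · intro hv
    exact Or.inl ⟨hv, mem_nbrF.1 (hsub hv)⟩

lemma deg_ownG_pos (G : SimpleGraph V) (Own : V → Finset V) {p u : V}
    (hu : p ∈ Own u) (hadj : G.Adj u p) : 0 < deg (ownG G Own) p := by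
  have : u ∈ Finset.univ.filter fun y => (ownG G Own).Adj p y := by
    simp only [mem_filter, mem_univ, true_and, ownG_adj]
    exact Or.inr ⟨hu, hadj⟩
  exact card_pos.2 ⟨u, this⟩

lemma ownG_cross (G : SimpleGraph V) (Own : V → Finset V) (D P : Finset V)
    (hdom : ∀ u, (Own u).Nonempty → u ∈ D) (hP : ∀ u, ∀ v ∈ Own u, v ∈ P) :
    ∀ u v, (ownG G Own).Adj u v → (u ∈ D ∧ v ∈ P) ∨ (u ∈ P ∧ v ∈ D) := by
  intro u v h
  rcases h with ⟨hv, -⟩ | ⟨hu, -⟩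
  · exact Or.inl ⟨hdom u ⟨v, hv⟩, hP u v hv⟩
  · exact Or.inr ⟨hP v u hu, hdom v ⟨u, hu⟩⟩

/-- number of neighbours inside `s` -/
def degIn (G : SimpleGraph V) (s : Finset V) (x : V) : ℕ := (s.filter fun y => G.Adj x y).card

/-- a DP-Nash-type solution on the sub-domain `s` with exact quotas `κ` on `D` -/
def Sol (G : SimpleGraph V) (κ : V → ℕ) (s D P : Finset V) (H : SimpleGraph V) : Prop :=
  H ≤ G ∧ (∀ u v, H.Adj u v → u ∈ s ∧ v ∈ s) ∧ D ∪ P = s ∧ Disjoint D P ∧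
  (∀ u v, H.Adj u v → (u ∈ D ∧ v ∈ P) ∨ (u ∈ P ∧ v ∈ D)) ∧
  (∀ p ∈ P, 0 < deg H p) ∧ (∀ x ∈ D, deg H x = κ x)

lemma liftStep (G : SimpleGraph V) (κ : V → ℕ) (s : Finset V) (c : V) (hcs : c ∈ s)
    (S : Finset V) (hSsub : S ⊆ s.filter fun y => G.Adj c y) (hScard : S.card = κ c)
    (D' P' : Finset V) (H' : SimpleGraph V)
    (hsol : Sol G (fun v => min (κ v) (degIn G (s \ insert c S) v)) (s \ insert c S) D' P' H')
    (havail : ∀ x ∈ D',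
      κ x - min (κ x) (degIn G (s \ insert c S) x) ≤ (S.filter fun y => G.Adj x y).card) :
    ∃ D P H, Sol G κ s D P H := by
  obtain ⟨hH'G, hH'dom, hDP'union, hDP'disj, hcross', hPdeg', hDdeg'⟩ := hsol
  set s' : Finset V := s \ insert c S with hs'
  have hSadj : ∀ v ∈ S, G.Adj c v := fun v hv => (mem_filter.1 (hSsub hv)).2
  have hSs : S ⊆ s := fun v hv => (mem_filter.1 (hSsub hv)).1
  have hcS : c ∉ S := fun h => G.loopless.irrefl c (hSadj c h)
  have hinss : insert c S ⊆ s := insert_subset hcs hSs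
  have hs'c : c ∉ s' := fun h => (mem_sdiff.1 h).2 (mem_insert_self c S)
  have hs'S : ∀ v ∈ S, v ∉ s' := fun v hv h => (mem_sdiff.1 h).2 (mem_insert_of_mem hv)
  have hD's' : D' ⊆ s' := hDP'union ▸ subset_union_left
  have hP's' : P' ⊆ s' := hDP'union ▸ subset_union_right
  have hD's : D' ⊆ s := hD's'.trans (sdiff_subset)
  -- choose fills
  have hFex : ∀ x, ∃ t, t ⊆ (S.filter fun y => G.Adj x y) ∧
      (x ∈ D' → t.card = κ x - min (κ x) (degIn G s' x)) := by
    intro x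
    by_cases hx : x ∈ D'
    · obtain ⟨t, ht1, ht2⟩ := Finset.exists_subset_card_eq (havail x hx)
      exact ⟨t, ht1, fun _ => ht2⟩
    · exact ⟨∅, empty_subset _, fun h => absurd h hx⟩
  choose F hFsub hFcard using hFex
  have hFadj : ∀ x, ∀ v ∈ F x, G.Adj x v := fun x v hv => (mem_filter.1 (hFsub x hv)).2
  have hFS : ∀ x, F x ⊆ S := fun x => (hFsub x).trans (filter_subset _ _)
  set Own : V → Finset V :=
    fun x => if x = c then S else if x ∈ D' then (nbrF H' x ∪ F x) else ∅ with hOwn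
  refine ⟨insert c D', P' ∪ S, ownG G Own, ownG_le G Own, ?_, ?_, ?_, ?_, ?_, ?_⟩
  -- targets of ownership are in P' ∪ S
  case' refine_4 =>
    have hOwnP : ∀ u, ∀ v ∈ Own u, v ∈ P' ∪ S := by
      intro u v hv
      simp only [hOwn] at hv
      split_ifs at hv with h1 h2
      · exact mem_union_right _ hv
      · rcases mem_union.1 hv with hv | hv
        · -- H'-neighbour of a D'-vertex is in P'
          have hadj : H'.Adj u v := by simpa [mem_nbrF] using hv
          rcases hcross' u v hadj with ⟨-, h⟩ | ⟨h, -⟩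
          · exact mem_union_left _ h
          · exact absurd h (disjoint_left.1 hDP'disj h2)
        · exact mem_union_right _ (hFS u hv)
      · exact absurd hv (notMem_empty v)
    have hdom : ∀ u, (Own u).Nonempty → u ∈ insert c D' := by
      intro u hu
      simp only [hOwn] at hu
      split_ifs at hu with h1 h2
      · exact h1 ▸ mem_insert_self _ _
      · exact mem_insert_of_mem h2
      · exact absurd hu (by simp)
    exact ownG_cross G Own _ _ hdom hOwnP
  · -- edges within s
    have howner : ∀ u, (Own u).Nonempty → u ∈ s := by
      intro u hu
      simp only [hOwn] at hu
      split_ifs at hu with h1 h2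
      · exact h1 ▸ hcs
      · exact hD's h2
      · exact absurd hu (by simp)
    have htarget : ∀ u, ∀ v ∈ Own u, v ∈ s := by
      intro u v hv
      simp only [hOwn] at hv
      split_ifs at hv with h1 h2
      · exact hSs hv
      · rcases mem_union.1 hv with hv | hv
        · exact sdiff_subset ((hH'dom u v (by simpa [mem_nbrF] using hv)).2)
        · exact hSs (hFS u hv)
      · exact absurd hv (notMem_empty v)
    intro u v h
    rcases h with ⟨hv, -⟩ | ⟨hu, -⟩
    · exact ⟨howner u ⟨v, hv⟩, htarget u v hv⟩
    · exact ⟨htarget v u hu, howner v ⟨u, hu⟩⟩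
  · -- union
    have h1 : s' ∪ insert c S = s := sdiff_union_of_subset hinss
    rw [← h1, ← hDP'union]
    ext a
    simp only [mem_union, mem_insert]
    tauto
  · -- disjoint
    rw [disjoint_left]
    intro a ha hmem
    rcases mem_insert.1 ha with rfl | ha'
    · rcases mem_union.1 hmem with h | h
      · exact hs'c (hP's' h)
      · exact hcS h
    · rcases mem_union.1 hmem with h | h
      · exact disjoint_left.1 hDP'disj ha' h
      · exact hs'S a h (hD's' ha')
  · -- P-coverage
    intro p hp
    rcases mem_union.1 hp with hp | hp
    · -- p ∈ P' : covered by an H'-edge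
      obtain ⟨u, hu⟩ := card_pos.1 (hPdeg' p hp)
      have hadj : H'.Adj p u := (mem_filter.1 hu).2
      have hu' : u ∈ D' := by
        rcases hcross' p u hadj with ⟨h, -⟩ | ⟨-, h⟩
        · exact absurd hp (disjoint_left.1 hDP'disj h)
        · exact h
      have huc : u ≠ c := fun h => hs'c (h ▸ hD's' hu')
      have hpOwn : p ∈ Own u := by
        simp only [hOwn, if_neg huc, if_pos hu']
        exact mem_union_left _ (mem_nbrF.2 (H'.adj_symm hadj))
      exact deg_ownG_pos G Own hpOwn (hH'G (H'.adj_symm hadj))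
    · -- p ∈ S : covered by c
      have hpOwn : p ∈ Own c := by simp only [hOwn, if_pos rfl]; exact hp
      exact deg_ownG_pos G Own hpOwn (hSadj p hp)
  · -- D-degrees
    have hOwnP : ∀ u, ∀ v ∈ Own u, v ∈ P' ∪ S := by
      intro u v hv
      simp only [hOwn] at hv
      split_ifs at hv with h1 h2
      · exact mem_union_right _ hv
      · rcases mem_union.1 hv with hv | hv
        · have hadj : H'.Adj u v := by simpa [mem_nbrF] using hv
          rcases hcross' u v hadj with ⟨-, h⟩ | ⟨h, -⟩
          · exact mem_union_left _ h
          · exact absurd h (disjoint_left.1 hDP'disj h2)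
        · exact mem_union_right _ (hFS u hv)
      · exact absurd hv (notMem_empty v)
    intro x hx
    have hnoback : ∀ v, x ∉ Own v := by
      intro v hmem
      have hxP : x ∈ P' ∪ S := hOwnP v x hmem
      rcases mem_insert.1 hx with rfl | hx'
      · rcases mem_union.1 hxP with h | h
        · exact hs'c (hP's' h)
        · exact hcS h
      · rcases mem_union.1 hxP with h | h
        · exact disjoint_left.1 hDP'disj hx' h
        · exact hs'S x h (hD's' hx')
    rcases mem_insert.1 hx with rfl | hx'
    · have hsub : Own x ⊆ nbrF G x := by
        simp only [hOwn, if_pos rfl]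
        intro v hv
        exact mem_nbrF.2 (hSadj v hv)
      rw [deg_ownG G Own x hsub hnoback]
      simp only [hOwn, if_pos rfl]
      exact hScard
    · have hxc : x ≠ c := fun h => hs'c (h ▸ hD's' hx')
      have hOx : Own x = nbrF H' x ∪ F x := by simp only [hOwn, if_neg hxc, if_pos hx']
      have hsub : Own x ⊆ nbrF G x := by
        rw [hOx]
        intro v hv
        rcases mem_union.1 hv with hv | hv
        · exact mem_nbrF.2 (hH'G (mem_nbrF.1 hv))
        · exact mem_nbrF.2 (hFadj x v hv)
      rw [deg_ownG G Own x hsub hnoback, hOx,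
        card_union_of_disjoint ?hdisj]
      · have h1 : (nbrF H' x).card = min (κ x) (degIn G s' x) := hDdeg' x hx'
        have h2 : (F x).card = κ x - min (κ x) (degIn G s' x) := hFcard x hx'
        rw [h1, h2]
        have := min_le_left (κ x) (degIn G s' x)
        omega
      case hdisj =>
        rw [disjoint_left]
        intro v hv hvF
        have hv' : v ∈ s' := (hH'dom x v (mem_nbrF.1 hv)).2
        exact hs'S v (hFS x hvF) hv'

lemma lemE (G : SimpleGraph V) : ∀ (n : ℕ) (s : Finset V) (κ : V → ℕ), s.card ≤ n →
    (∀ v ∈ s, κ v ≤ degIn G s v) → ∃ D P H, Sol G κ s D P H := by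
  intro n
  induction n with
  | zero =>
    intro s κ hcard _
    have hs : s = ∅ := card_eq_zero.1 (Nat.le_zero.1 hcard)
    subst hs
    refine ⟨∅, ∅, ⊥, bot_le, ?_, by simp, disjoint_bot_left, ?_, by simp, by simp⟩
    · intro u v h; exact absurd h (by simp)
    · intro u v h; exact absurd h (by simp)
  | succ n ih =>
    intro s κ hcard hκs
    by_cases hall0 : ∀ v ∈ s, κ v = 0
    · refine ⟨s, ∅, ⊥, bot_le, ?_, by simp, disjoint_bot_right, ?_, by simp, ?_⟩
      · intro u v h; exact absurd h (by simp)
      · intro u v h; exact absurd h (by simp)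
      · intro x hx; rw [hall0 x hx]; simp [deg]
    · push_neg at hall0
      obtain ⟨v₀, hv₀s, hv₀⟩ := hall0
      have hmain : ∀ c ∈ s, ∀ S ⊆ (s.filter fun y => G.Adj c y), S.card = κ c →
          (∀ x ∈ s \ insert c S, 0 < κ x → G.Adj x c → κ x < degIn G s x) →
          ∃ D P H, Sol G κ s D P H := by
        intro c hcs S hSsub hScard hslack
        set s' : Finset V := s \ insert c S with hs'
        have hs'n : s'.card ≤ n := by
          have h1 : s' ⊆ s.erase c := by
            intro a ha
            rcases mem_sdiff.1 ha with ⟨has, hnot⟩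
            exact mem_erase.2 ⟨fun h => hnot (h ▸ mem_insert_self c S), has⟩
          have h2 := card_le_card h1
          rw [card_erase_of_mem hcs] at h2
          omega
        obtain ⟨D', P', H', hsol⟩ := ih s' (fun v => min (κ v) (degIn G s' v)) hs'n
          (fun v _ => min_le_right _ _)
        apply liftStep G κ s c hcs S hSsub hScard D' P' H' hsol
        -- availability of fills
        intro x hx
        have hxs' : x ∈ s' := hsol.2.2.1 ▸ (mem_union_left _ hx)
        have hxs : x ∈ s := (mem_sdiff.1 hxs').1
        have hκx : κ x ≤ degIn G s x := hκs x hxs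
        -- cover the neighbourhood
        have hcover : (s.filter fun y => G.Adj x y) ⊆
            ((s'.filter fun y => G.Adj x y) ∪ (S.filter fun y => G.Adj x y)) ∪
              (if G.Adj x c then {c} else ∅) := by
          intro a ha
          rcases mem_filter.1 ha with ⟨has, hadj⟩
          by_cases ha' : a ∈ s'
          · exact mem_union_left _ (mem_union_left _ (mem_filter.2 ⟨ha', hadj⟩))
          · have : a ∈ insert c S := by
              by_contra hcon
              exact ha' (mem_sdiff.2 ⟨has, hcon⟩)
            rcases mem_insert.1 this with rfl | haS
            · rw [if_pos hadj]
              exact mem_union_right _ (mem_singleton_self a)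
            · exact mem_union_left _ (mem_union_right _ (mem_filter.2 ⟨haS, hadj⟩))
        have hcard2 : degIn G s x ≤ degIn G s' x + (S.filter fun y => G.Adj x y).card +
            (if G.Adj x c then 1 else 0) := by
          have h1 := card_le_card hcover
          have h2 := card_union_le ((s'.filter fun y => G.Adj x y) ∪ (S.filter fun y => G.Adj x y))
            (if G.Adj x c then ({c} : Finset V) else ∅)
          have h3 := card_union_le (s'.filter fun y => G.Adj x y) (S.filter fun y => G.Adj x y)
          have h4 : (if G.Adj x c then ({c} : Finset V) else ∅).card = if G.Adj x c then 1 else 0 := by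
            split_ifs <;> simp
          unfold degIn
          omega
        by_cases hadjxc : G.Adj x c
        · -- x is adjacent to the removed center
          by_cases hκ0 : κ x = 0
          · simp [hκ0]
          · have hlt : κ x < degIn G s x := hslack x hxs' (Nat.pos_of_ne_zero hκ0) hadjxc
            rcases min_choice (κ x) (degIn G s' x) with hm | hm <;> rw [hm] <;>
              [skip; skip] <;>
            · have := min_le_left (κ x) (degIn G s' x)
              have := min_le_right (κ x) (degIn G s' x)
              rw [if_pos hadjxc] at hcard2
              omega
        · rw [if_neg hadjxc] at hcard2
          rcases min_choice (κ x) (degIn G s' x) with hm | hm <;> rw [hm] <;> omega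
      -- now pick the center
      by_cases hex : ∃ u ∈ s, 0 < κ u ∧ κ u = degIn G s u
      · obtain ⟨c, hcs, -, hceq⟩ := hex
        apply hmain c hcs (s.filter fun y => G.Adj c y) (Subset.refl _)
        · exact hceq.symm
        · -- no x adjacent to c survives in s'
          intro x hx hxpos hadj
          exfalso
          rcases mem_sdiff.1 hx with ⟨hxs, hnot⟩
          exact hnot (mem_insert_of_mem (mem_filter.2 ⟨hxs, G.adj_symm hadj⟩))
      · push_neg at hex
        have hlt : κ v₀ ≤ (s.filter fun y => G.Adj v₀ y).card := hκs v₀ hv₀s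
        obtain ⟨S, hS1, hS2⟩ := Finset.exists_subset_card_eq hlt
        apply hmain v₀ hv₀s S hS1 hS2
        intro x hx hxpos _
        have hxs : x ∈ s := (mem_sdiff.1 hx).1
        exact lt_of_le_of_ne (hκs x hxs) (hex x hxs hxpos)

def IsWitness (G : SimpleGraph V) (κ : V → ℕ) (W : Finset V) : Prop :=
  W.Nonempty ∧ W ⊆ Ypos G κ ∧ ∃ f : V → V × ℕ, Set.InjOn f ↑(LL G κ W) ∧
    ∀ x ∈ LL G κ W, (f x).1 ∈ W ∧ G.Adj x (f x).1 ∧ (f x).2 < κ (f x).1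

lemma mem_XX {G : SimpleGraph V} {κ : V → ℕ} {x : V} : x ∈ XX G κ ↔ κ x = deg G x := by
  simp [XX]

lemma nbrW_eq_inter (G : SimpleGraph V) (x : V) (W : Finset V) :
    nbrW G x W = nbrF G x ∩ W := by
  ext v; simp [nbrW, nbrF, and_comm]

lemma notXX_lt {G : SimpleGraph V} {κ : V → ℕ} (hκ : ∀ v, κ v ≤ deg G v) {v : V}
    (h : v ∉ XX G κ) : κ v < deg G v :=
  lt_of_le_of_ne (hκ v) (fun h' => h (mem_XX.2 h'))

lemma LL_singleton (G : SimpleGraph V) (κ : V → ℕ) (hκ : ∀ v, κ v ≤ deg G v) (y : V) :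
    LL G κ {y} = nbrF G y ∩ XX G κ := by
  ext v
  simp only [LL, mem_filter, nbrW_eq_inter, mem_union, mem_inter, mem_nbrF]
  constructor
  · rintro ⟨hv1, hv2⟩
    have hsub : nbrF G v ∩ {y} ⊆ {y} := inter_subset_right
    have hle : (nbrF G v ∩ {y}).card ≤ 1 := by
      simpa using card_le_card hsub
    rcases hv1 with hv1 | hv1
    · -- v ∈ XX
      have h0 : deg G v - κ v = 0 := by rw [mem_XX.1 hv1]; omega
      rw [h0] at hv2
      have hy : y ∈ nbrF G v ∩ {y} := by
        rcases card_pos.1 hv2 with ⟨a, ha⟩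
        rcases mem_inter.1 ha with ⟨ha1, ha2⟩
        rw [mem_singleton.1 ha2] at ha1
        exact mem_inter.2 ⟨ha1, mem_singleton_self y⟩
      exact ⟨G.adj_symm (mem_nbrF.1 (mem_inter.1 hy).1), hv1⟩
    · -- v ∈ ZZ : impossible
      exfalso
      have hvnotX : v ∉ XX G κ := fun h => (mem_sdiff.1 hv1).2 (mem_union_left _ h)
      have : 1 ≤ deg G v - κ v := by
        have := notXX_lt hκ hvnotX
        omega
      omega
  · rintro ⟨hadj, hX⟩
    refine ⟨Or.inl hX, ?_⟩
    have h0 : deg G v - κ v = 0 := by rw [mem_XX.1 hX]; omega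
    rw [h0]
    apply card_pos.2
    exact ⟨y, mem_inter.2 ⟨mem_nbrF.2 (G.adj_symm hadj), mem_singleton_self y⟩⟩

lemma witness_singleton (G : SimpleGraph V) (κ : V → ℕ) (hκ : ∀ v, κ v ≤ deg G v)
    (y : V) (hy : y ∈ YY G κ) (hypos : 0 < κ y)
    (hcard : (nbrF G y ∩ XX G κ).card ≤ κ y) : IsWitness G κ {y} := by
  refine ⟨singleton_nonempty y, ?_, ?_⟩
  · intro a ha
    rw [mem_singleton.1 ha]
    exact mem_filter.2 ⟨hy, hypos⟩
  · have hLL : LL G κ {y} = nbrF G y ∩ XX G κ := LL_singleton G κ hκ y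
    set L₀ := LL G κ {y} with hL₀
    set e := L₀.equivFin with he
    refine ⟨fun x => if h : x ∈ L₀ then (y, (e ⟨x, h⟩ : Fin L₀.card)) else (y, 0), ?_, ?_⟩
    · intro x1 hx1 x2 hx2 heq
      simp only [Finset.mem_coe] at hx1 hx2
      dsimp only at heq
      rw [dif_pos hx1, dif_pos hx2, Prod.mk.injEq] at heq
      have : e ⟨x1, hx1⟩ = e ⟨x2, hx2⟩ := Fin.val_injective heq.2
      have := e.injective this
      exact congrArg Subtype.val this
    · intro x hx
      dsimp only
      rw [dif_pos hx]
      refine ⟨mem_singleton_self y, ?_, ?_⟩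
      · have := hLL ▸ hx
        exact G.adj_symm (mem_nbrF.1 (mem_inter.1 this).1)
      · have h1 : ((e ⟨x, hx⟩ : Fin L₀.card) : ℕ) < L₀.card := (e ⟨x, hx⟩).2
        have h2 : L₀.card ≤ κ y := by rw [hLL]; exact hcard
        simp only []
        omega

lemma stability (G : SimpleGraph V) (κ : V → ℕ) (hκ : ∀ v, κ v ≤ deg G v)
    (T : Finset V) (hTwit : IsWitness G κ T)
    (hTmin : ∀ W', IsWitness G κ W' → T.card ≤ W'.card) :
    ∀ y ∈ YY G κ, κ y + (nbrF G y ∩ T.erase y).card ≤ deg G y := by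
  intro y hy
  by_contra hcon
  push_neg at hcon
  have hsub1 : nbrF G y ∩ T.erase y ⊆ nbrF G y := inter_subset_left
  have hc_le : (nbrF G y ∩ T.erase y).card ≤ deg G y := by
    rw [deg_eq_nbrF]; exact card_le_card hsub1
  have hypos : 0 < κ y := by omega
  -- X-neighbours and T-neighbours are disjoint
  have hdisj : Disjoint (nbrF G y ∩ XX G κ) (nbrF G y ∩ T.erase y) := by
    rw [disjoint_left]
    intro a ha1 ha2
    have haX : a ∈ XX G κ := (mem_inter.1 ha1).2
    have haT : a ∈ T := mem_of_mem_erase (mem_inter.1 ha2).2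
    have haY : a ∈ YY G κ := mem_filter.1 (mem_filter.1 (hTwit.2.1 haT)).1 |>.1 |> fun _ => by
      have := hTwit.2.1 haT
      exact (mem_filter.1 this).1
    exact (mem_filter.1 haY).2.1 haX
  have hsum : (nbrF G y ∩ XX G κ).card + (nbrF G y ∩ T.erase y).card ≤ deg G y := by
    rw [deg_eq_nbrF, ← card_union_of_disjoint hdisj]
    exact card_le_card (union_subset inter_subset_left inter_subset_left)
  have hXlt : (nbrF G y ∩ XX G κ).card < κ y := by omega
  have hwy : IsWitness G κ {y} := witness_singleton G κ hκ y hy hypos (le_of_lt hXlt)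
  have h1 : T.card ≤ 1 := by simpa using hTmin {y} hwy
  obtain ⟨w, hw⟩ := hTwit.1
  have hT1 : T = {w} := by
    apply Finset.eq_singleton_iff_unique_mem.2
    exact ⟨hw, fun a ha => card_le_one.1 h1 a ha w hw⟩
  rw [hT1] at hcon
  by_cases hyw : y = w
  · subst hyw
    rw [Finset.erase_singleton, inter_empty, card_empty] at hcon
    exact absurd (hκ y) (by omega)
  · rw [Finset.erase_eq_of_notMem (by simp [hyw])] at hcon
    have : (nbrF G y ∩ {w}).card ≤ 1 := by
      simpa using card_le_card (inter_subset_right : nbrF G y ∩ {w} ⊆ {w})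
    have hyX : κ y = deg G y := by
      have := hκ y; omega
    exact (mem_filter.1 hy).2.1 (mem_XX.2 hyX)

/-- If `M*(G,κ)` fails, i.e. some nonempty `W ⊆ Y^{κ>0}` admits a matching in
`G^aux` from `L(W)` into `W^κ` saturating `L(W)`, then there is a DP-Nash
subgraph whose `D`-set contains a vertex of `Y` (hence differs from `X ∪ Z`). -/
theorem stmt7 (G : SimpleGraph V) (κ : V → ℕ) (hκ : ∀ v, κ v ≤ deg G v)
    (hind : ∀ u ∈ XX G κ ∪ ZZ G κ, ∀ v ∈ XX G κ ∪ ZZ G κ, ¬ G.Adj u v)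
    (W : Finset V) (hWne : W.Nonempty) (hWsub : W ⊆ Ypos G κ)
    (f : V → V × ℕ) (hinj : Set.InjOn f ↑(LL G κ W))
    (hf : ∀ x ∈ LL G κ W, (f x).1 ∈ W ∧ G.Adj x (f x).1 ∧ (f x).2 < κ (f x).1) :
    ∃ (D P : Finset V) (H : SimpleGraph V),
      IsDPNash G κ D P H ∧ (∃ y ∈ YY G κ, y ∈ D) ∧ D ≠ XX G κ ∪ ZZ G κ := by
  classical
  -- minimal witness
  have hWit : IsWitness G κ W := ⟨hWne, hWsub, f, hinj, hf⟩
  obtain ⟨T, hT𝒲, hTmin0⟩ := Finset.exists_min_image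
    (univ.filter fun W' : Finset V => IsWitness G κ W') Finset.card
    ⟨W, mem_filter.2 ⟨mem_univ _, hWit⟩⟩
  have hTwit : IsWitness G κ T := (mem_filter.1 hT𝒲).2
  have hTmin : ∀ W', IsWitness G κ W' → T.card ≤ W'.card :=
    fun W' h => hTmin0 W' (mem_filter.2 ⟨mem_univ _, h⟩)
  have hstab := stability G κ hκ T hTwit hTmin
  obtain ⟨hTne, hTpos, f₀, hinj₀, hf₀⟩ := hTwit
  -- basic class facts
  have hT_YY : T ⊆ YY G κ := fun w hw => (mem_filter.1 (hTpos hw)).1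
  have hYY_nX : ∀ y ∈ YY G κ, y ∉ XX G κ := fun y hy => (mem_filter.1 hy).2.1
  have hZZ_nX : ∀ z ∈ ZZ G κ, z ∉ XX G κ :=
    fun z hz h => (mem_sdiff.1 hz).2 (mem_union_left _ h)
  have hZZ_nY : ∀ z ∈ ZZ G κ, z ∉ YY G κ :=
    fun z hz h => (mem_sdiff.1 hz).2 (mem_union_right _ h)
  have huniv : ∀ v : V, v ∈ XX G κ ∨ v ∈ YY G κ ∨ v ∈ ZZ G κ := by
    intro v
    by_cases h1 : v ∈ XX G κ
    · exact Or.inl h1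
    by_cases h2 : v ∈ YY G κ
    · exact Or.inr (Or.inl h2)
    exact Or.inr (Or.inr (mem_sdiff.2 ⟨mem_univ v, fun h => (mem_union.1 h).elim h1 h2⟩))
  have hZZ_noadjX : ∀ z ∈ ZZ G κ, ∀ x ∈ XX G κ, ¬ G.Adj x z := by
    intro z hz x hx hadj
    exact hZZ_nY z hz (mem_filter.2 ⟨mem_univ z, hZZ_nX z hz, x, hx, hadj⟩)
  -- layers
  set L : Finset V := LL G κ T with hLdef
  set A : Finset V := (XX G κ) \ L with hAdef
  set Y1 : Finset V := (YY G κ \ T).filter (fun y => ∃ a ∈ A, G.Adj a y) with hY1def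
  set R : Finset V := ((YY G κ \ T) \ Y1) ∪ (ZZ G κ \ L) with hRdef
  have hLsub : L ⊆ XX G κ ∪ ZZ G κ := filter_subset _ _
  have hLLmem : ∀ v, v ∈ L ↔ (v ∈ XX G κ ∪ ZZ G κ) ∧
      deg G v - κ v < (nbrF G v ∩ T).card := by
    intro v
    rw [hLdef]
    simp [LL, nbrW_eq_inter]
  have hXX_L : ∀ x ∈ XX G κ, (x ∈ L ↔ ∃ w ∈ T, G.Adj x w) := by
    intro x hx
    have h0 : deg G x - κ x = 0 := by rw [mem_XX.1 hx]; omega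
    rw [hLLmem, h0]
    constructor
    · rintro ⟨-, hlt⟩
      obtain ⟨a, ha⟩ := card_pos.1 hlt
      exact ⟨a, (mem_inter.1 ha).2, mem_nbrF.1 (mem_inter.1 ha).1⟩
    · rintro ⟨w, hwT, hadj⟩
      exact ⟨mem_union_left _ hx,
        card_pos.2 ⟨w, mem_inter.2 ⟨mem_nbrF.2 hadj, hwT⟩⟩⟩
  have hAX : A ⊆ XX G κ := sdiff_subset
  have hA_noT : ∀ a ∈ A, ∀ w ∈ T, ¬ G.Adj a w := by
    intro a ha w hw hadj
    exact (mem_sdiff.1 ha).2 ((hXX_L a (hAX ha)).2 ⟨w, hw, hadj⟩)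
  have hA_nbr_Y1 : ∀ a ∈ A, nbrF G a ⊆ Y1 := by
    intro a ha v hv
    have hadj : G.Adj a v := mem_nbrF.1 hv
    have hvY : v ∈ YY G κ := by
      rcases huniv v with h | h | h
      · exact absurd hadj (hind a (mem_union_left _ (hAX ha)) v (mem_union_left _ h))
      · exact h
      · exact absurd hadj (hind a (mem_union_left _ (hAX ha)) v (mem_union_right _ h))
    have hvnT : v ∉ T := fun hvT => hA_noT a ha v hvT hadj
    exact mem_filter.2 ⟨mem_sdiff.2 ⟨hvY, hvnT⟩, a, ha, hadj⟩
  have hinterTerase : ∀ w, nbrF G w ∩ T.erase w = nbrF G w ∩ T := by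
    intro w
    ext a
    simp only [mem_inter, mem_erase]
    constructor
    · rintro ⟨h1, -, h2⟩; exact ⟨h1, h2⟩
    · rintro ⟨h1, h2⟩
      exact ⟨h1, fun h => G.loopless.irrefl w (by rw [h] at h1; exact mem_nbrF.1 h1), h2⟩
  have hstabT : ∀ w ∈ T, κ w + (nbrF G w ∩ T).card ≤ deg G w := by
    intro w hw
    have := hstab w (hT_YY hw)
    rwa [hinterTerase w] at this
  have hstabR : ∀ v ∈ R, κ v + (nbrF G v ∩ T).card ≤ deg G v := by
    intro v hv
    rcases mem_union.1 hv with hv | hv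
    · have hvY : v ∈ YY G κ := (mem_sdiff.1 (mem_sdiff.1 hv).1).1
      have hvnT : v ∉ T := (mem_sdiff.1 (mem_sdiff.1 hv).1).2
      have := hstab v hvY
      rwa [Finset.erase_eq_of_notMem hvnT] at this
    · have hvL : v ∉ L := (mem_sdiff.1 hv).2
      have hvZ : v ∈ ZZ G κ := (mem_sdiff.1 hv).1
      have h1 : ¬ (deg G v - κ v < (nbrF G v ∩ T).card) :=
        fun hlt => hvL ((hLLmem v).2 ⟨mem_union_right _ hvZ, hlt⟩)
      push_neg at h1
      have := hκ v
      omega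
  -- partners and quota sets
  set Q : V → Finset V := fun w => L.filter (fun x => (f₀ x).1 = w) with hQdef
  have hQcard : ∀ w, (Q w).card ≤ κ w := by
    intro w
    have h1 : (Q w).card ≤ (range (κ w)).card := by
      apply card_le_card_of_injOn (fun x => (f₀ x).2)
      · intro x hx
        rcases mem_filter.1 hx with ⟨hxL, hxw⟩
        have h2 := (hf₀ x hxL).2.2
        rw [hxw] at h2
        exact mem_range.2 h2
      · intro x1 hx1 x2 hx2 heq
        simp only [Finset.mem_coe] at hx1 hx2
        rcases mem_filter.1 hx1 with ⟨hx1L, hx1w⟩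
        rcases mem_filter.1 hx2 with ⟨hx2L, hx2w⟩
        apply hinj₀ (Finset.mem_coe.2 hx1L) (Finset.mem_coe.2 hx2L)
        apply Prod.ext
        · rw [hx1w, hx2w]
        · exact heq
    simpa using h1
  have hQsub : ∀ w, Q w ⊆ nbrF G w \ T := by
    intro w x hx
    rcases mem_filter.1 hx with ⟨hxL, hxw⟩
    have hadj := (hf₀ x hxL).2.1
    rw [hxw] at hadj
    refine mem_sdiff.2 ⟨mem_nbrF.2 (G.adj_symm hadj), ?_⟩
    intro hxT
    rcases mem_union.1 (hLsub hxL) with h | h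
    · exact hYY_nX x (hT_YY hxT) h
    · exact hZZ_nY x h (hT_YY hxT)
  have hSex : ∀ w, ∃ Sw : Finset V, Q w ⊆ Sw ∧ Sw ⊆ nbrF G w \ T ∧
      (w ∈ T → Sw.card = κ w) := by
    intro w
    by_cases hw : w ∈ T
    · have h1 : (nbrF G w ∩ T).card + (nbrF G w \ T).card = deg G w := by
        rw [deg_eq_nbrF]
        exact Finset.card_inter_add_card_sdiff _ _
      have h2 : κ w ≤ (nbrF G w \ T).card := by
        have := hstabT w hw
        omega
      obtain ⟨u, hu1, hu2, hu3⟩ := exists_subsuperset_card_eq (hQsub w) (hQcard w) h2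
      exact ⟨u, hu1, hu2, fun _ => hu3⟩
    · exact ⟨Q w, Subset.refl _, hQsub w, fun h => absurd h hw⟩
  choose S hS1 hS2 hS3 using hSex
  -- adoptees and the recursion region
  set Pp : Finset V := (T.biUnion S) ∩ R with hPpdef
  set R' : Finset V := R \ Pp with hR'def
  obtain ⟨DR, PR, HR, hsolR⟩ := lemE G R'.card R' (fun v => min (κ v) (degIn G R' v))
    le_rfl (fun v _ => min_le_right _ _)
  obtain ⟨hHRG, hHRdom, hDRunion, hDRdisj, hcrossR, hPRdeg, hDRdeg⟩ := hsolR
  have hDRsub : DR ⊆ R' := hDRunion ▸ subset_union_left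
  have hPRsub : PR ⊆ R' := hDRunion ▸ subset_union_right
  -- no A-neighbours inside R
  have hRnoA : ∀ v ∈ R, ∀ a ∈ A, ¬ G.Adj a v := by
    intro v hv a ha hadj
    rcases mem_union.1 hv with hv | hv
    · exact (mem_sdiff.1 hv).2
        (mem_filter.2 ⟨(mem_sdiff.1 hv).1, a, ha, hadj⟩)
    · exact hZZ_noadjX v (mem_sdiff.1 hv).1 a (hAX ha) hadj
  -- covering the neighbourhood of an R'-vertex
  have hRcover : ∀ v ∈ R', nbrF G v ⊆
      ((nbrF G v ∩ T) ∪ (nbrF G v ∩ (L ∪ Y1 ∪ Pp))) ∪ (R'.filter fun y => G.Adj v y) := by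
    intro v hv u hu
    have hadj : G.Adj v u := mem_nbrF.1 hu
    have hvR : v ∈ R := (mem_sdiff.1 hv).1
    have hmemR : u ∈ R → u ∈ Pp ∨ u ∈ R' := by
      intro huR
      by_cases huPp : u ∈ Pp
      · exact Or.inl huPp
      · exact Or.inr (mem_sdiff.2 ⟨huR, huPp⟩)
    have hdone : u ∈ Pp ∨ u ∈ R' →
        u ∈ ((nbrF G v ∩ T) ∪ (nbrF G v ∩ (L ∪ Y1 ∪ Pp))) ∪ (R'.filter fun y => G.Adj v y) := by
      rintro (h | h)
      · exact mem_union_left _ (mem_union_right _ (mem_inter.2 ⟨hu, mem_union_right _ h⟩))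
      · exact mem_union_right _ (mem_filter.2 ⟨h, hadj⟩)
    rcases huniv u with h | h | h
    · by_cases huA : u ∈ A
      · exact absurd (G.adj_symm hadj) (fun hh => hRnoA v hvR u huA hh)
      · have huL : u ∈ L := by
          by_contra huL
          exact huA (mem_sdiff.2 ⟨h, huL⟩)
        exact mem_union_left _ (mem_union_right _
          (mem_inter.2 ⟨hu, mem_union_left _ (mem_union_left _ huL)⟩))
    · by_cases huT : u ∈ T
      · exact mem_union_left _ (mem_union_left _ (mem_inter.2 ⟨hu, huT⟩))
      by_cases huY1 : u ∈ Y1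
      · exact mem_union_left _ (mem_union_right _
          (mem_inter.2 ⟨hu, mem_union_left _ (mem_union_right _ huY1)⟩))
      exact hdone (hmemR (mem_union_left _ (mem_sdiff.2 ⟨mem_sdiff.2 ⟨h, huT⟩, huY1⟩)))
    · by_cases huL : u ∈ L
      · exact mem_union_left _ (mem_union_right _
          (mem_inter.2 ⟨hu, mem_union_left _ (mem_union_left _ huL)⟩))
      · exact hdone (hmemR (mem_union_right _ (mem_sdiff.2 ⟨h, huL⟩)))
  -- fills for the recursion D-side
  have havail : ∀ v ∈ DR, κ v - min (κ v) (degIn G R' v) ≤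
      (nbrF G v ∩ (L ∪ Y1 ∪ Pp)).card := by
    intro v hv
    have hvR' : v ∈ R' := hDRsub hv
    have h1 := card_le_card (hRcover v hvR')
    have h2 := card_union_le ((nbrF G v ∩ T) ∪ (nbrF G v ∩ (L ∪ Y1 ∪ Pp)))
      (R'.filter fun y => G.Adj v y)
    have h3 := card_union_le (nbrF G v ∩ T) (nbrF G v ∩ (L ∪ Y1 ∪ Pp))
    have h4 := hstabR v (mem_sdiff.1 hvR').1
    have h6 : deg G v = (nbrF G v).card := deg_eq_nbrF G v
    have h5 : degIn G R' v = (R'.filter fun y => G.Adj v y).card := rfl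
    rcases min_choice (κ v) (degIn G R' v) with hm | hm <;> rw [hm] <;> omega
  have hFex : ∀ v, ∃ t, t ⊆ nbrF G v ∩ (L ∪ Y1 ∪ Pp) ∧
      (v ∈ DR → t.card = κ v - min (κ v) (degIn G R' v)) := by
    intro v
    by_cases hv : v ∈ DR
    · obtain ⟨t, ht1, ht2⟩ := Finset.exists_subset_card_eq (havail v hv)
      exact ⟨t, ht1, fun _ => ht2⟩
    · exact ⟨∅, empty_subset _, fun h => absurd h hv⟩
  choose F hFsub hFcard using hFex
  -- assembling the graph
  set Own : V → Finset V := fun u =>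
    if u ∈ A then nbrF G u else if u ∈ T then S u
    else if u ∈ DR then (Finset.univ.filter fun y => HR.Adj u y) ∪ F u else ∅ with hOwndef
  set D : Finset V := T ∪ A ∪ DR with hDdef
  set P : Finset V := L ∪ Y1 ∪ Pp ∪ PR with hPdef
  -- membership helpers
  have hR_nT : ∀ v ∈ R, v ∉ T := by
    intro v hv hvT
    rcases mem_union.1 hv with h | h
    · exact (mem_sdiff.1 (mem_sdiff.1 h).1).2 hvT
    · exact hZZ_nY v (mem_sdiff.1 h).1 (hT_YY hvT)
  have hR_nXX : ∀ v ∈ R, v ∉ XX G κ := by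
    intro v hv hvX
    rcases mem_union.1 hv with h | h
    · exact hYY_nX v (mem_sdiff.1 (mem_sdiff.1 h).1).1 hvX
    · exact hZZ_nX v (mem_sdiff.1 h).1 hvX
  have hR_nL : ∀ v ∈ R, v ∉ L := by
    intro v hv hvL
    rcases mem_union.1 hv with h | h
    · rcases mem_union.1 (hLsub hvL) with h' | h'
      · exact hYY_nX v (mem_sdiff.1 (mem_sdiff.1 h).1).1 h'
      · exact hZZ_nY v h' (mem_sdiff.1 (mem_sdiff.1 h).1).1
    · exact (mem_sdiff.1 h).2 hvL
  have hR_nY1 : ∀ v ∈ R, v ∉ Y1 := by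
    intro v hv hvY1
    rcases mem_union.1 hv with h | h
    · exact (mem_sdiff.1 h).2 hvY1
    · exact hZZ_nY v (mem_sdiff.1 h).1 (mem_sdiff.1 (mem_filter.1 hvY1).1).1
  have hT_nA : ∀ w ∈ T, w ∉ A := fun w hw hwA => hYY_nX w (hT_YY hw) (hAX hwA)
  have hPp_R : Pp ⊆ R := inter_subset_right
  have hR'_R : R' ⊆ R := sdiff_subset
  have hDR_R : DR ⊆ R := fun v hv => hR'_R (hDRsub hv)
  have hPR_R : PR ⊆ R := fun v hv => hR'_R (hPRsub hv)
  have hDR_nA : ∀ v ∈ DR, v ∉ A := fun v hv hvA => hR_nXX v (hDR_R hv) (hAX hvA)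
  have hDR_nT : ∀ v ∈ DR, v ∉ T := fun v hv => hR_nT v (hDR_R hv)
  -- disjointness of D and P
  have hDPdisj : Disjoint D P := by
    rw [disjoint_left]
    intro a haD haP
    have haP' : a ∈ L ∨ a ∈ Y1 ∨ a ∈ Pp ∨ a ∈ PR := by
      rcases mem_union.1 haP with h | h
      · rcases mem_union.1 h with h' | h'
        · rcases mem_union.1 h' with h'' | h''
          · exact Or.inl h''
          · exact Or.inr (Or.inl h'')
        · exact Or.inr (Or.inr (Or.inl h'))
      · exact Or.inr (Or.inr (Or.inr h))
    have haD' : a ∈ T ∨ a ∈ A ∨ a ∈ DR := by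
      rcases mem_union.1 haD with h | h
      · rcases mem_union.1 h with h' | h'
        · exact Or.inl h'
        · exact Or.inr (Or.inl h')
      · exact Or.inr (Or.inr h)
    rcases haD' with hD1 | hD1 | hD1 <;> rcases haP' with hP1 | hP1 | hP1 | hP1
    · rcases mem_union.1 (hLsub hP1) with h | h
      · exact hYY_nX a (hT_YY hD1) h
      · exact hZZ_nY a h (hT_YY hD1)
    · exact (mem_sdiff.1 (mem_filter.1 hP1).1).2 hD1
    · exact hR_nT a (hPp_R hP1) hD1
    · exact hR_nT a (hPR_R hP1) hD1
    · exact (mem_sdiff.1 hD1).2 hP1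
    · exact hYY_nX a (mem_sdiff.1 (mem_filter.1 hP1).1).1 (hAX hD1)
    · exact hR_nXX a (hPp_R hP1) (hAX hD1)
    · exact hR_nXX a (hPR_R hP1) (hAX hD1)
    · exact hR_nL a (hDR_R hD1) hP1
    · exact hR_nY1 a (hDR_R hD1) hP1
    · exact (mem_sdiff.1 (hDRsub hD1)).2 hP1
    · exact disjoint_left.1 hDRdisj hD1 hP1
  -- ownership targets lie in P
  have hOwnP : ∀ u, ∀ v ∈ Own u, v ∈ P := by
    intro u v hv
    simp only [hOwndef] at hv
    split_ifs at hv with h1 h2 h3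
    · -- u ∈ A
      exact mem_union_left _ (mem_union_left _ (mem_union_right _ (hA_nbr_Y1 u h1 hv)))
    · -- u ∈ T
      have hv2 := hS2 u hv
      rcases mem_sdiff.1 hv2 with ⟨hvnbr, hvnT⟩
      have hadj : G.Adj u v := mem_nbrF.1 hvnbr
      rcases huniv v with h | h | h
      · -- v ∈ XX: must be in L
        have hvA : v ∉ A := fun hvA => hA_noT v hvA u h2 (G.adj_symm hadj)
        have hvL : v ∈ L := by
          by_contra hvL
          exact hvA (mem_sdiff.2 ⟨h, hvL⟩)
        exact mem_union_left _ (mem_union_left _ (mem_union_left _ hvL))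
      · -- v ∈ YY
        by_cases hvY1 : v ∈ Y1
        · exact mem_union_left _ (mem_union_left _ (mem_union_right _ hvY1))
        · have hvR : v ∈ R := mem_union_left _
            (mem_sdiff.2 ⟨mem_sdiff.2 ⟨h, hvnT⟩, hvY1⟩)
          have hvPp : v ∈ Pp := mem_inter.2 ⟨mem_biUnion.2 ⟨u, h2, hv⟩, hvR⟩
          exact mem_union_left _ (mem_union_right _ hvPp)
      · -- v ∈ ZZ
        by_cases hvL : v ∈ L
        · exact mem_union_left _ (mem_union_left _ (mem_union_left _ hvL))
        · have hvR : v ∈ R := mem_union_right _ (mem_sdiff.2 ⟨h, hvL⟩)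
          have hvPp : v ∈ Pp := mem_inter.2 ⟨mem_biUnion.2 ⟨u, h2, hv⟩, hvR⟩
          exact mem_union_left _ (mem_union_right _ hvPp)
    · -- u ∈ DR
      rcases mem_union.1 hv with hv | hv
      · have hadj : HR.Adj u v := (mem_filter.1 hv).2
        rcases hcrossR u v hadj with ⟨-, h⟩ | ⟨h, -⟩
        · exact mem_union_right _ h
        · exact absurd h (disjoint_left.1 hDRdisj h3)
      · rcases mem_inter.1 (hFsub u hv) with ⟨-, h⟩
        rcases mem_union.1 h with h' | h'
        · rcases mem_union.1 h' with h'' | h''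
          · exact mem_union_left _ (mem_union_left _ (mem_union_left _ h''))
          · exact mem_union_left _ (mem_union_left _ (mem_union_right _ h''))
        · exact mem_union_left _ (mem_union_right _ h')
    · exact absurd hv (notMem_empty v)
  have hdom : ∀ u, (Own u).Nonempty → u ∈ D := by
    intro u hu
    simp only [hOwndef] at hu
    split_ifs at hu with h1 h2 h3
    · exact mem_union_left _ (mem_union_right _ h1)
    · exact mem_union_left _ (mem_union_left _ h2)
    · exact mem_union_right _ h3
    · exact absurd hu (by simp)
  have hnoback : ∀ x ∈ D, ∀ v, x ∉ Own v :=
    fun x hx v hmem => disjoint_left.1 hDPdisj hx (hOwnP v x hmem)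
  -- the final graph
  refine ⟨D, P, ownG G Own, ⟨ownG_le G Own, ?_, hDPdisj, ?_, ?_, ?_⟩, ?_, ?_⟩
  · -- D ∪ P = univ
    apply Finset.eq_univ_of_forall
    intro v
    rcases huniv v with h | h | h
    · by_cases hvL : v ∈ L
      · exact mem_union_right _ (mem_union_left _ (mem_union_left _ (mem_union_left _ hvL)))
      · exact mem_union_left _ (mem_union_left _ (mem_union_right _ (mem_sdiff.2 ⟨h, hvL⟩)))
    · by_cases hvT : v ∈ T
      · exact mem_union_left _ (mem_union_left _ (mem_union_left _ hvT))
      by_cases hvY1 : v ∈ Y1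
      · exact mem_union_right _ (mem_union_left _ (mem_union_left _ (mem_union_right _ hvY1)))
      have hvR : v ∈ R := mem_union_left _ (mem_sdiff.2 ⟨mem_sdiff.2 ⟨h, hvT⟩, hvY1⟩)
      by_cases hvPp : v ∈ Pp
      · exact mem_union_right _ (mem_union_left _ (mem_union_right _ hvPp))
      · have hvR' : v ∈ R' := mem_sdiff.2 ⟨hvR, hvPp⟩
        have := hDRunion ▸ hvR'
        rcases mem_union.1 this with h' | h'
        · exact mem_union_left _ (mem_union_right _ h')
        · exact mem_union_right _ (mem_union_right _ h')
    · by_cases hvL : v ∈ L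
      · exact mem_union_right _ (mem_union_left _ (mem_union_left _ (mem_union_left _ hvL)))
      · have hvR : v ∈ R := mem_union_right _ (mem_sdiff.2 ⟨h, hvL⟩)
        by_cases hvPp : v ∈ Pp
        · exact mem_union_right _ (mem_union_left _ (mem_union_right _ hvPp))
        · have hvR' : v ∈ R' := mem_sdiff.2 ⟨hvR, hvPp⟩
          have := hDRunion ▸ hvR'
          rcases mem_union.1 this with h' | h'
          · exact mem_union_left _ (mem_union_right _ h')
          · exact mem_union_right _ (mem_union_right _ h')
  · -- bipartite
    intro u v h
    exact ownG_cross G Own D P hdom hOwnP u v h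
  · -- P-coverage
    intro p hp
    have hp' : p ∈ L ∨ p ∈ Y1 ∨ p ∈ Pp ∨ p ∈ PR := by
      rcases mem_union.1 hp with h | h
      · rcases mem_union.1 h with h' | h'
        · rcases mem_union.1 h' with h'' | h''
          · exact Or.inl h''
          · exact Or.inr (Or.inl h'')
        · exact Or.inr (Or.inr (Or.inl h'))
      · exact Or.inr (Or.inr (Or.inr h))
    rcases hp' with hp1 | hp1 | hp1 | hp1
    · -- p ∈ L : covered by its partner
      have hfp := hf₀ p hp1
      set w := (f₀ p).1 with hwdef
      have hwT : w ∈ T := hfp.1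
      have hpQ : p ∈ Q w := by
        rw [hQdef]
        exact mem_filter.2 ⟨hp1, rfl⟩
      have hpS : p ∈ S w := hS1 w hpQ
      have hpOwn : p ∈ Own w := by
        simp only [hOwndef, if_neg (hT_nA w hwT), if_pos hwT]
        exact hpS
      exact deg_ownG_pos G Own hpOwn (G.adj_symm hfp.2.1)
    · -- p ∈ Y1 : covered by an A-vertex
      rcases mem_filter.1 hp1 with ⟨-, a, ha, hadj⟩
      have hpOwn : p ∈ Own a := by
        simp only [hOwndef, if_pos ha]
        exact mem_nbrF.2 hadj
      exact deg_ownG_pos G Own hpOwn hadj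
    · -- p ∈ Pp : covered by an adopting T-vertex
      rcases mem_inter.1 hp1 with ⟨hbi, -⟩
      rcases mem_biUnion.1 hbi with ⟨w, hwT, hpS⟩
      have hpOwn : p ∈ Own w := by
        simp only [hOwndef, if_neg (hT_nA w hwT), if_pos hwT]
        exact hpS
      have hadj : G.Adj w p := mem_nbrF.1 (mem_sdiff.1 (hS2 w hpS)).1
      exact deg_ownG_pos G Own hpOwn hadj
    · -- p ∈ PR : covered inside the recursion
      obtain ⟨u, hu⟩ := card_pos.1 (hPRdeg p hp1)
      have hadj : HR.Adj p u := (mem_filter.1 hu).2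
      have huDR : u ∈ DR := by
        rcases hcrossR p u hadj with ⟨h, -⟩ | ⟨-, h⟩
        · exact absurd hp1 (disjoint_left.1 hDRdisj h)
        · exact h
      have hpOwn : p ∈ Own u := by
        simp only [hOwndef, if_neg (hDR_nA u huDR), if_neg (hDR_nT u huDR), if_pos huDR]
        exact mem_union_left _ (mem_filter.2 ⟨mem_univ p, HR.adj_symm hadj⟩)
      exact deg_ownG_pos G Own hpOwn (hHRG (HR.adj_symm hadj))
  · -- D-degrees
    intro x hx
    have hxD' : x ∈ T ∨ x ∈ A ∨ x ∈ DR := by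
      rcases mem_union.1 hx with h | h
      · rcases mem_union.1 h with h' | h'
        · exact Or.inl h'
        · exact Or.inr (Or.inl h')
      · exact Or.inr (Or.inr h)
    rcases hxD' with hx1 | hx1 | hx1
    · -- x ∈ T
      have hOx : Own x = S x := by
        simp only [hOwndef, if_neg (hT_nA x hx1), if_pos hx1]
      have hsub : Own x ⊆ nbrF G x := by
        rw [hOx]
        exact fun v hv => (mem_sdiff.1 (hS2 x hv)).1
      rw [deg_ownG G Own x hsub (hnoback x hx), hOx, hS3 x hx1]
      exact (min_eq_right (hκ x)).symm
    · -- x ∈ A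
      have hOx : Own x = nbrF G x := by simp only [hOwndef, if_pos hx1]
      rw [deg_ownG G Own x (hOx ▸ Subset.refl _) (hnoback x hx), hOx, ← deg_eq_nbrF]
      rw [← mem_XX.1 (hAX hx1)]
      exact (min_self (κ x)).symm
    · -- x ∈ DR
      have hOx : Own x = (Finset.univ.filter fun y => HR.Adj x y) ∪ F x := by
        simp only [hOwndef, if_neg (hDR_nA x hx1), if_neg (hDR_nT x hx1), if_pos hx1]
      have hsub : Own x ⊆ nbrF G x := by
        rw [hOx]
        intro v hv
        rcases mem_union.1 hv with hv | hv
        · exact mem_nbrF.2 (hHRG (mem_filter.1 hv).2)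
        · exact (mem_inter.1 (hFsub x hv)).1
      rw [deg_ownG G Own x hsub (hnoback x hx), hOx]
      have hdisjF : Disjoint (Finset.univ.filter fun y => HR.Adj x y) (F x) := by
        rw [disjoint_left]
        intro a ha haF
        have haR' : a ∈ R' := (hHRdom x a (mem_filter.1 ha).2).2
        rcases mem_inter.1 (hFsub x haF) with ⟨-, h⟩
        rcases mem_union.1 h with h' | h'
        · rcases mem_union.1 h' with h'' | h''
          · exact hR_nL a (hR'_R haR') h''
          · exact hR_nY1 a (hR'_R haR') h''
        · exact (mem_sdiff.1 haR').2 h'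
      rw [card_union_of_disjoint hdisjF]
      have h1 : (Finset.univ.filter fun y => HR.Adj x y).card = min (κ x) (degIn G R' x) :=
        hDRdeg x hx1
      have h2 := hFcard x hx1
      have h3 := min_le_left (κ x) (degIn G R' x)
      have h4 := hκ x
      rw [h1, h2]
      rcases min_choice (κ x) (degIn G R' x) with hm | hm <;> rw [hm] <;> omega
  · -- a Y-vertex in D
    obtain ⟨w₀, hw₀⟩ := hTne
    exact ⟨w₀, hT_YY hw₀, mem_union_left _ (mem_union_left _ hw₀)⟩
  · -- D ≠ X ∪ Z
    intro hcon
    obtain ⟨w₀, hw₀⟩ := hTne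
    have : w₀ ∈ XX G κ ∪ ZZ G κ := hcon ▸ (mem_union_left _ (mem_union_left _ hw₀))
    rcases mem_union.1 this with h | h
    · exact hYY_nX w₀ (hT_YY hw₀) h
    · exact hZZ_nY w₀ h (hT_YY hw₀)
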